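/- Let $c>0$, $\tau\ge 0$, $a_+<0$, $b_+>0$ with $a_++b_+<0$. Then the function $\chi_+(z)=z^2-cz+a_++b_+e^{-zc\tau}$ has exactly two real zeros, one negative and one positive. -/

import Mathlib

/-- A strictly convex function of the given form cannot have three zeros. -/
private lemma chi_no_three_zeros (c a b k : ℝ) (hb : 0 < b) {x1 x2 x3 : ℝ}
    (h12 : x1 < x2) (h23 : x2 < x3)
    (h1 : x1 ^ 2 - c * x1 + a + b * Real.exp (-(x1 * k)) = 0)
    (h2 : x2 ^ 2 - c * x2 + a + b * Real.exp (-(x2 * k)) = 0)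
    (h3 : x3 ^ 2 - c * x3 + a + b * Real.exp (-(x3 * k)) = 0) : False := by
  have h13 : x1 < x3 := h12.trans h23
  have hd : 0 < x3 - x1 := by linarith
  set t : ℝ := (x3 - x2) / (x3 - x1) with htdef
  have ht : 0 < t := div_pos (by linarith) hd
  have ht1 : t < 1 := (div_lt_one hd).2 (by linarith)
  have hs : 0 < 1 - t := by linarith
  have hx2 : t * x1 + (1 - t) * x3 = x2 := by
    rw [htdef]
    field_simp [hd.ne']
    ring
  have hexp : Real.exp (t * (-(x1 * k)) + (1 - t) * (-(x3 * k))) ≤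
      t * Real.exp (-(x1 * k)) + (1 - t) * Real.exp (-(x3 * k)) :=
    convexOn_exp.2 (Set.mem_univ _) (Set.mem_univ _) ht.le hs.le (by ring)
  rw [show t * (-(x1 * k)) + (1 - t) * (-(x3 * k)) = -(x2 * k) by
    rw [← hx2]; ring] at hexp
  have hbe : b * Real.exp (-(x2 * k)) ≤
      b * (t * Real.exp (-(x1 * k)) + (1 - t) * Real.exp (-(x3 * k))) :=
    mul_le_mul_of_nonneg_left hexp hb.le
  have h0 : 0 < (x1 - x3) ^ 2 := by nlinarith
  have hsq : x2 ^ 2 < t * x1 ^ 2 + (1 - t) * x3 ^ 2 := by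
    calc x2 ^ 2 = (t * x1 + (1 - t) * x3) ^ 2 := by rw [hx2]
    _ < t * x1 ^ 2 + (1 - t) * x3 ^ 2 := by
        nlinarith [mul_pos (mul_pos ht hs) h0]
  have H1 : t * (x1 ^ 2 - c * x1 + a + b * Real.exp (-(x1 * k))) = 0 := by
    rw [h1, mul_zero]
  have H3 : (1 - t) * (x3 ^ 2 - c * x3 + a + b * Real.exp (-(x3 * k))) = 0 := by
    rw [h3, mul_zero]
  have hcx : c * x2 = c * (t * x1 + (1 - t) * x3) := by rw [hx2]
  nlinarith [H1, H3, hcx, hbe, hsq, h2]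

/-- The characteristic function `χ₊(z) = z² - cz + a₊ + b₊ e^{-z c τ}` with
`c > 0`, `τ ≥ 0`, `a₊ < 0`, `b₊ > 0`, `a₊ + b₊ < 0` has exactly two real zeros,
one negative and one positive. -/
theorem chi_plus_two_real_zeros (c τ a b : ℝ) (hc : 0 < c) (hτ : 0 ≤ τ)
    (ha : a < 0) (hb : 0 < b) (hab : a + b < 0) :
    ∃ μ₂ μ₁ : ℝ, μ₂ < 0 ∧ 0 < μ₁ ∧
      μ₂ ^ 2 - c * μ₂ + a + b * Real.exp (-(μ₂ * (c * τ))) = 0 ∧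
      μ₁ ^ 2 - c * μ₁ + a + b * Real.exp (-(μ₁ * (c * τ))) = 0 ∧
      ∀ x : ℝ, x ^ 2 - c * x + a + b * Real.exp (-(x * (c * τ))) = 0 →
        x = μ₂ ∨ x = μ₁ := by
  set k : ℝ := c * τ with hk
  set f : ℝ → ℝ := fun x => x ^ 2 - c * x + a + b * Real.exp (-(x * k)) with hf
  have hcont : Continuous f := by
    apply Continuous.add
    · fun_prop
    · exact continuous_const.mul ((continuous_neg.comp
        (continuous_id.mul continuous_const)).rexp)
  have hfx : ∀ x : ℝ, x ^ 2 - c * x + a < f x := by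
    intro x
    have h1 : 0 < b * Real.exp (-(x * k)) := mul_pos hb (Real.exp_pos _)
    simp only [hf]
    linarith
  have hf0 : f 0 < 0 := by
    simp only [hf, zero_mul, neg_zero, Real.exp_zero]
    norm_num
    linarith
  have hneg : 0 < f (a - 1) := by
    have h := hfx (a - 1)
    nlinarith [mul_pos hc (show (0:ℝ) < 1 - a by linarith)]
  have hpos : 0 < f (c + 1 - a) := by
    have h := hfx (c + 1 - a)
    nlinarith [mul_pos hc (show (0:ℝ) < 1 - a by linarith)]
  -- negative root via IVT
  have hivt1 : (0:ℝ) ∈ f '' Set.Ioo (a - 1) 0 := by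
    apply intermediate_value_Ioo' (by linarith : a - 1 ≤ 0) hcont.continuousOn
    exact ⟨hf0, hneg⟩
  obtain ⟨μ₂, hμ₂mem, hμ₂⟩ := hivt1
  have hivt2 : (0:ℝ) ∈ f '' Set.Ioo 0 (c + 1 - a) := by
    apply intermediate_value_Ioo (by linarith : (0:ℝ) ≤ c + 1 - a)
      hcont.continuousOn
    exact ⟨hf0, hpos⟩
  obtain ⟨μ₁, hμ₁mem, hμ₁⟩ := hivt2
  have hμ₂neg : μ₂ < 0 := hμ₂mem.2
  have hμ₁pos : 0 < μ₁ := hμ₁mem.1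
  have hlt : μ₂ < μ₁ := hμ₂neg.trans hμ₁pos
  refine ⟨μ₂, μ₁, hμ₂neg, hμ₁pos, hμ₂, hμ₁, ?_⟩
  intro x hx
  by_contra hcon
  push_neg at hcon
  obtain ⟨hx2, hx1⟩ := hcon
  rcases lt_trichotomy x μ₂ with h | h | h
  · exact chi_no_three_zeros c a b k hb h hlt hx hμ₂ hμ₁
  · exact hx2 h
  · rcases lt_trichotomy x μ₁ with h' | h' | h'
    · exact chi_no_three_zeros c a b k hb h h' hμ₂ hx hμ₁
    · exact hx1 h'
    · exact chi_no_three_zeros c a b k hb hlt h' hμ₂ hμ₁ hx
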